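/- A vehicle starting at position 0 with speed v0, subject to |u(t)| ≤ u_max and 0 < v(t) ≤ v_max, cannot reach position L earlier than time t0 + L/v_max + (v_max − v0)²/(2 u_max v_max) when it can reach v_max before covering distance L; hence this expression is a lower bound on the terminal time t^m. -/

import Mathlib

lemma mono_aux {a b : ℝ} {f f' : ℝ → ℝ}
    (hf : ∀ t, HasDerivAt f (f' t) t)
    (h0 : ∀ t ∈ Set.Icc a b, 0 ≤ f' t) : MonotoneOn f (Set.Icc a b) := by
  apply monotoneOn_of_deriv_nonneg (convex_Icc a b)
  · exact fun t _ => (hf t).continuousAt.continuousWithinAt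
  · exact fun t _ => (hf t).differentiableAt.differentiableWithinAt
  · intro t htmem
    rw [(hf t).deriv]
    rw [interior_Icc] at htmem
    exact h0 t (Set.Ioo_subset_Icc_self htmem)

theorem terminal_time_lower_bound_vmax
    (t0 tm v0 L vmax umax : ℝ)
    (p v u : ℝ → ℝ)
    (ht : t0 ≤ tm) (humax : 0 < umax) (hv0pos : 0 < v0) (hv0max : v0 ≤ vmax)
    (hL : (vmax^2 - v0^2) / (2 * umax) ≤ L)
    (hp : ∀ t, HasDerivAt p (v t) t)
    (hv : ∀ t, HasDerivAt v (u t) t)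
    (hu_bd : ∀ t ∈ Set.Icc t0 tm, u t ≤ umax)
    (hv_bd : ∀ t ∈ Set.Icc t0 tm, 0 < v t ∧ v t ≤ vmax)
    (hp0 : p t0 = 0) (hv0 : v t0 = v0) (hpm : p tm = L) :
    tm ≥ t0 + L / vmax + (vmax - v0)^2 / (2 * umax * vmax) := by
  have hvmax : 0 < vmax := lt_of_lt_of_le hv0pos hv0max
  set τ : ℝ := (vmax - v0) / umax with hτdef
  have hτ0 : 0 ≤ τ := div_nonneg (by linarith) humax.le
  -- Step 1: v t ≤ v0 + umax*(t - t0) on [t0, tm]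
  have hvle : ∀ t ∈ Set.Icc t0 tm, v t ≤ v0 + umax * (t - t0) := by
    have hm : MonotoneOn (fun t => v0 + umax * (t - t0) - v t) (Set.Icc t0 tm) := by
      apply mono_aux (f' := fun t => umax - u t)
      · intro t
        have h1 : HasDerivAt (fun t => v0 + umax * (t - t0)) umax t := by
          have := (((hasDerivAt_id t).sub_const t0).const_mul umax).const_add v0
          simpa using this
        simpa using h1.fun_sub (hv t)
      · intro t htm
        have := hu_bd t htm
        linarith
    intro t htm
    have := hm (Set.left_mem_Icc.mpr ht) htm htm.1
    simp only [sub_self, mul_zero, add_zero, hv0] at this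
    linarith
  -- Step 2: p t ≤ v0*(t-t0) + umax*(t-t0)^2/2 on [t0, tm]
  have hple : ∀ t ∈ Set.Icc t0 tm, p t ≤ v0 * (t - t0) + umax * (t - t0)^2 / 2 := by
    have hm : MonotoneOn (fun t => v0 * (t - t0) + umax * (t - t0)^2 / 2 - p t)
        (Set.Icc t0 tm) := by
      apply mono_aux (f' := fun t => v0 + umax * (t - t0) - v t)
      · intro t
        have h1 : HasDerivAt (fun t => v0 * (t - t0) + umax * (t - t0)^2 / 2)
            (v0 + umax * (t - t0)) t := by
          have hid : HasDerivAt (fun t : ℝ => t - t0) 1 t := (hasDerivAt_id t).sub_const t0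
          have h2 : HasDerivAt (fun t : ℝ => (t - t0)^2) (2 * (t - t0)) t := by
            simpa using hid.fun_pow 2
          have : HasDerivAt (fun t => v0 * (t - t0) + umax * (t - t0)^2 / 2)
              (v0 * 1 + umax * (2 * (t - t0)) / 2) t := ((hid.const_mul v0).fun_add ((h2.const_mul umax).div_const 2))
          convert this using 1
          ring
        simpa using h1.fun_sub (hp t)
      · intro t htm
        have := hvle t htm
        linarith
    intro t htm
    have := hm (Set.left_mem_Icc.mpr ht) htm htm.1
    simp only [sub_self, mul_zero, add_zero, hp0, zero_pow, zero_div] at this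
    nlinarith [this]
  rcases lt_or_ge tm (t0 + τ) with hcase | hcase
  · -- Contradiction case: tm - t0 < τ
    exfalso
    have hT : p tm ≤ v0 * (tm - t0) + umax * (tm - t0)^2 / 2 :=
      hple tm (Set.right_mem_Icc.mpr ht)
    rw [hpm] at hT
    have hTlt : tm - t0 < τ := by linarith
    have heq : (vmax^2 - v0^2) / (2 * umax) = v0 * τ + umax * τ^2 / 2 := by
      rw [hτdef]; field_simp; ring
    have hTnn : 0 ≤ tm - t0 := by linarith
    have h1 : 0 < v0 * (τ - (tm - t0)) := mul_pos hv0pos (by linarith)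
    have h2 : 0 ≤ umax * ((τ - (tm - t0)) * (τ + (tm - t0))) :=
      mul_nonneg humax.le (mul_nonneg (by linarith) (by linarith))
    nlinarith [h1, h2]
  · -- Main case: t0 + τ ≤ tm
    set s : ℝ := t0 + τ with hsdef
    have hs_mem : s ∈ Set.Icc t0 tm := ⟨by linarith, hcase⟩
    have hps : p s ≤ v0 * τ + umax * τ^2 / 2 := by
      have := hple s hs_mem
      simpa [hsdef] using this
    -- p tm - p s ≤ vmax * (tm - s)
    have hm2 : MonotoneOn (fun t => vmax * (t - s) - p t) (Set.Icc s tm) := by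
      apply mono_aux (f' := fun t => vmax - v t)
      · intro t
        have h1 : HasDerivAt (fun t => vmax * (t - s)) vmax t := by
          simpa using ((hasDerivAt_id t).sub_const s).const_mul vmax
        simpa using h1.fun_sub (hp t)
      · intro t htm
        have : t ∈ Set.Icc t0 tm := ⟨le_trans hs_mem.1 htm.1, htm.2⟩
        linarith [(hv_bd t this).2]
    have hstep : p tm - p s ≤ vmax * (tm - s) := by
      have := hm2 (Set.left_mem_Icc.mpr hcase) (Set.right_mem_Icc.mpr hcase) hcase
      simp only [sub_self, mul_zero, zero_sub] at this
      linarith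
    rw [hpm] at hstep
    have key2 : L + (vmax - v0)^2 / (2 * umax) ≤ vmax * (tm - t0) := by
      have heq : v0 * τ + umax * τ^2 / 2 - vmax * τ = -((vmax - v0)^2 / (2 * umax)) := by
        rw [hτdef]; field_simp; ring
      have hexp : vmax * (tm - s) = vmax * (tm - t0) - vmax * τ := by
        rw [hsdef]; ring
      linarith [hstep, hps]
    have hdiv : (L + (vmax - v0)^2 / (2 * umax)) / vmax ≤ tm - t0 :=
      (div_le_iff₀ hvmax).mpr (by linarith [key2, mul_comm vmax (tm - t0)])
    rw [add_div] at hdiv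
    have heq2 : (vmax - v0)^2 / (2 * umax) / vmax = (vmax - v0)^2 / (2 * umax * vmax) := by
      rw [div_div]
    linarith [hdiv, heq2 ▸ hdiv]
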